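/- Let 𝐞 = (e₁,…,e_d) be an R-basis of V_r and set, for 1 ≤ i ≤ d, U_i = Re_i, and U_{d+1} = R(e₁+⋯+e_d). Then the star configuration {U₁,…,U_d,U_{d+1}} consists of d+1 pairwise distinct boundary submodules and is a spherical code in V_r of minimum distance exactly 2r. -/

import Mathlib

open Pointwise

namespace SphericalSubmoduleCodes

variable {R : Type*} [CommRing R] {V : Type*} [AddCommGroup V] [Module R V]

/-- `nmin π U₁ U₂ = min {m ≥ 0 : π^m U₁ ⊆ U₂}`. -/
noncomputable def nmin (π : R) (U₁ U₂ : Submodule R V) : ℕ :=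
  sInf {m : ℕ | (π ^ m) • U₁ ≤ U₂}

/-- The distance `dist(U₁,U₂) = min{m : π^m U₁ ⊆ U₂} + min{n : π^n U₂ ⊆ U₁}`
(used for boundary submodules, where `Ũ = U`). -/
noncomputable def distMod (π : R) (U₁ U₂ : Submodule R V) : ℕ :=
  nmin π U₁ U₂ + nmin π U₂ U₁

/-- `m_U = max {0 ≤ m ≤ r : U ⊆ π^m V}`. -/
noncomputable def mExp (π : R) (r : ℕ) (U : Submodule R V) : ℕ :=
  sSup {m : ℕ | m ≤ r ∧ U ≤ (π ^ m) • (⊤ : Submodule R V)}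

/-- `Ũ`, the unique maximal submodule with `π^{m_U} Ũ = U`: the kernel of
`x ↦ π^{m_U} x + U`. -/
noncomputable def tilde (π : R) (r : ℕ) (U : Submodule R V) : Submodule R V :=
  U.comap ((π ^ mExp π r U) • (LinearMap.id : V →ₗ[R] V))

/-- The boundary `∂L(V_r) = {U : π^{r-1} V ⊄ U and U ⊄ π V}`. -/
def boundary (π : R) (r : ℕ) : Set (Submodule R V) :=
  {U | ¬ ((π ^ (r - 1)) • (⊤ : Submodule R V) ≤ U) ∧ ¬ (U ≤ π • (⊤ : Submodule R V))}

/-- The minimum distance of a code of (boundary) submodules. -/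
noncomputable def minDist (π : R) (C : Set (Submodule R V)) : ℕ :=
  sInf {n : ℕ | ∃ U₁ ∈ C, ∃ U₂ ∈ C, U₁ ≠ U₂ ∧ distMod π U₁ U₂ = n}

/-- homothety: `U ∼ U' ↔ Ũ = Ũ'`. -/
noncomputable def homSetoid (π : R) (r : ℕ) : Setoid (Submodule R V) :=
  Setoid.ker (tilde π r)

/-- The distance on homothety classes. -/
noncomputable def distClass (π : R) (r : ℕ) :
    Quotient (homSetoid (V := V) π r) → Quotient (homSetoid (V := V) π r) → ℕ :=
  Quotient.lift₂
    (fun U₁ U₂ => nmin π (tilde π r U₁) (tilde π r U₂) + nmin π (tilde π r U₂) (tilde π r U₁))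
    (by
      intro a₁ b₁ a₂ b₂ h₁ h₂
      have ha : tilde π r a₁ = tilde π r a₂ := h₁
      have hb : tilde π r b₁ = tilde π r b₂ := h₂
      simp only [ha, hb])

/-- The Grassmannian: free rank-`n` submodules. -/
def Grass (R : Type*) [CommRing R] {V : Type*} [AddCommGroup V] [Module R V]
    (n : ℕ) : Set (Submodule R V) :=
  {U | Module.Free R U ∧ Module.finrank R U = n}

/-- `binom(a,b)_X = ∏_{i=0}^{b-1} (1 - X^{a-i})/(1 - X^{b-i})`. -/
def qbinom (X : ℚ) (a b : ℕ) : ℚ :=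
  ∏ i ∈ Finset.range b, (1 - X ^ (a - i)) / (1 - X ^ (b - i))

end SphericalSubmoduleCodes

namespace SphericalSubmoduleCodes

section Aux

variable {R : Type*} [CommRing R] {V : Type*} [AddCommGroup V] [Module R V]

lemma mem_psmul {a : R} {S : Submodule R V} {x : V} :
    x ∈ a • S ↔ ∃ y ∈ S, a • y = x := Iff.rfl

lemma nmin_eq_r {π : R} {r : ℕ} (hπr : π ^ r = 0) {v w : V}
    (hne : ∀ m < r, ∀ c : R, π ^ m • v ≠ c • w) :
    nmin π (Submodule.span R {v}) (Submodule.span R {w}) = r := by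
  have hmem : r ∈ {m : ℕ |
      (π ^ m) • (Submodule.span R {v} : Submodule R V) ≤ Submodule.span R {w}} := by
    intro x hx
    obtain ⟨y, hy, rfl⟩ := mem_psmul.mp hx
    rw [hπr, zero_smul]
    exact Submodule.zero_mem _
  have hlb : ∀ m ∈ {m : ℕ |
      (π ^ m) • (Submodule.span R {v} : Submodule R V) ≤ Submodule.span R {w}}, r ≤ m := by
    intro m hm
    by_contra h
    push_neg at h
    have h1 : π ^ m • v ∈ (π ^ m) • (Submodule.span R {v} : Submodule R V) :=
      Submodule.smul_mem_pointwise_smul _ _ _ (Submodule.mem_span_singleton_self v)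
    obtain ⟨c, hc⟩ := Submodule.mem_span_singleton.mp (hm h1)
    exact hne m h c hc.symm
  exact le_antisymm (Nat.sInf_le hmem) (le_csInf ⟨r, hmem⟩ hlb)

end Aux

/-- The star configuration `{Re₁, …, Re_d, R(e₁+⋯+e_d)}` consists of `d+1` pairwise
distinct boundary submodules and is a spherical code in `V_r` of minimum distance
exactly `2r`. -/
theorem star_configuration_is_spherical
    {R : Type*} [CommRing R] [Fintype R] [IsLocalRing R]
    {V : Type*} [AddCommGroup V] [Module R V]
    (d r : ℕ) (hd : 2 ≤ d) (hr : 1 ≤ r) (b : Module.Basis (Fin d) R V)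
    (π : R) (hmax : IsLocalRing.maximalIdeal R = Ideal.span {π})
    (hπr : π ^ r = 0) (hπr' : π ^ (r - 1) ≠ 0)
    (C : Set (Submodule R V))
    (hC : C = (Set.range fun i : Fin d => Submodule.span R {b i}) ∪
      {Submodule.span R {∑ i : Fin d, b i}}) :
    Nat.card C = d + 1 ∧ C ⊆ boundary π r ∧ C.Nontrivial ∧ minDist π C = 2 * r := by
  set s : V := ∑ i : Fin d, b i with hs
  -- basic facts
  have hpow_ne : ∀ m < r, π ^ m ≠ 0 := by
    intro m hm h0
    apply hπr'
    have : r - 1 = m + (r - 1 - m) := by omega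
    rw [this, pow_add, h0, zero_mul]
  have hrepr_s : ∀ k, b.repr s k = 1 := by
    intro k
    rw [hs, map_sum]
    simp [Finsupp.finset_sum_apply, Module.Basis.repr_self, Finsupp.single_apply]
  have hcoord : ∀ (m : ℕ) (c : R) (v w : V), π ^ m • v = c • w →
      ∀ k, π ^ m * b.repr v k = c * b.repr w k := by
    intro m c v w heq k
    have := congrArg (fun x => b.repr x k) heq
    simpa using this
  have hexists_ne : ∀ i : Fin d, ∃ j : Fin d, j ≠ i :=
    fun i => Fintype.exists_ne_of_one_lt_card (by simp; omega) i
  -- the three non-containment facts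
  have h1 : ∀ i j : Fin d, i ≠ j → ∀ m < r, ∀ c : R, π ^ m • b i ≠ c • b j := by
    intro i j hij m hm c heq
    have := hcoord m c _ _ heq i
    simp [Module.Basis.repr_self, Finsupp.single_apply, hij.symm] at this
    exact hpow_ne m hm this
  have h2 : ∀ i : Fin d, ∀ m < r, ∀ c : R, π ^ m • b i ≠ c • s := by
    intro i m hm c heq
    obtain ⟨j, hj⟩ := hexists_ne i
    have hcj := hcoord m c _ _ heq j
    simp [Module.Basis.repr_self, Finsupp.single_apply, hrepr_s, (Ne.symm hj : ¬ i = j)] at hcj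
    have hci := hcoord m c _ _ heq i
    simp [Module.Basis.repr_self, Finsupp.single_apply, hrepr_s, ← hcj] at hci
    exact hpow_ne m hm hci
  have h3 : ∀ i : Fin d, ∀ m < r, ∀ c : R, π ^ m • s ≠ c • b i := by
    intro i m hm c heq
    obtain ⟨j, hj⟩ := hexists_ne i
    have hcj := hcoord m c _ _ heq j
    simp [Module.Basis.repr_self, Finsupp.single_apply, hrepr_s, (Ne.symm hj : ¬ i = j)] at hcj
    exact hpow_ne m hm hcj
  -- distinctness
  have hd1 : ∀ i j : Fin d, i ≠ j →
      (Submodule.span R {b i} : Submodule R V) ≠ Submodule.span R {b j} := by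
    intro i j hij heq
    have : b i ∈ (Submodule.span R {b j} : Submodule R V) := by
      rw [← heq]; exact Submodule.mem_span_singleton_self _
    obtain ⟨c, hc⟩ := Submodule.mem_span_singleton.mp this
    exact h1 i j hij 0 hr c (by simpa using hc.symm)
  have hd2 : ∀ i : Fin d,
      (Submodule.span R {b i} : Submodule R V) ≠ Submodule.span R {s} := by
    intro i heq
    have : b i ∈ (Submodule.span R {s} : Submodule R V) := by
      rw [← heq]; exact Submodule.mem_span_singleton_self _
    obtain ⟨c, hc⟩ := Submodule.mem_span_singleton.mp this
    exact h2 i 0 hr c (by simpa using hc.symm)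
  set f : Fin d → Submodule R V := fun i => Submodule.span R {b i} with hf
  have hinj : Function.Injective f := by
    intro i j h
    by_contra hij
    exact hd1 i j hij h
  have hxne : (Submodule.span R {s} : Submodule R V) ∉ Set.range f := by
    rintro ⟨i, hi⟩
    exact hd2 i hi
  have i0 : Fin d := ⟨0, by omega⟩
  refine ⟨?_, ?_, ?_, ?_⟩
  · -- cardinality
    rw [hC, Nat.card_coe_set_eq,
      Set.ncard_union_eq (Set.disjoint_singleton_right.mpr hxne)
        (Set.finite_range f) (Set.finite_singleton _)]
    have h4 : (Set.range f).ncard = d := by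
      rw [← Nat.card_coe_set_eq, Nat.card_range_of_injective hinj,
        Nat.card_eq_fintype_card, Fintype.card_fin]
    rw [h4, Set.ncard_singleton]
  · -- boundary
    intro U hU
    rw [hC] at hU
    rcases hU with ⟨i, rfl⟩ | hU
    · constructor
      · intro hle
        obtain ⟨j, hj⟩ := hexists_ne i
        have hm : π ^ (r - 1) • b j ∈ (π ^ (r - 1)) • (⊤ : Submodule R V) :=
          Submodule.smul_mem_pointwise_smul _ _ _ trivial
        obtain ⟨c, hc⟩ := Submodule.mem_span_singleton.mp (hle hm)
        exact h1 j i hj (r - 1) (by omega) c hc.symm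
      · intro hle
        have : b i ∈ π • (⊤ : Submodule R V) :=
          hle (Submodule.mem_span_singleton_self _)
        obtain ⟨y, -, hy⟩ := mem_psmul.mp this
        have h1' : π * b.repr y i = 1 := by
          have := congrArg (fun x => b.repr x i) hy
          simpa [Module.Basis.repr_self, Finsupp.single_apply] using this
        have : (1 : R) = 0 := by
          calc (1 : R) = (π * b.repr y i) ^ r := by rw [h1', one_pow]
          _ = π ^ r * (b.repr y i) ^ r := by ring
          _ = 0 := by rw [hπr, zero_mul]
        exact one_ne_zero this
    · rw [Set.mem_singleton_iff] at hU
      subst hU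
      constructor
      · intro hle
        have hm : π ^ (r - 1) • b i0 ∈ (π ^ (r - 1)) • (⊤ : Submodule R V) :=
          Submodule.smul_mem_pointwise_smul _ _ _ trivial
        obtain ⟨c, hc⟩ := Submodule.mem_span_singleton.mp (hle hm)
        exact h2 i0 (r - 1) (by omega) c hc.symm
      · intro hle
        have : s ∈ π • (⊤ : Submodule R V) :=
          hle (Submodule.mem_span_singleton_self _)
        obtain ⟨y, -, hy⟩ := mem_psmul.mp this
        have h1' : π * b.repr y i0 = 1 := by
          have := congrArg (fun x => b.repr x i0) hy
          simpa [hrepr_s] using this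
        have : (1 : R) = 0 := by
          calc (1 : R) = (π * b.repr y i0) ^ r := by rw [h1', one_pow]
          _ = π ^ r * (b.repr y i0) ^ r := by ring
          _ = 0 := by rw [hπr, zero_mul]
        exact one_ne_zero this
  · -- nontrivial
    refine ⟨Submodule.span R {b i0}, ?_, Submodule.span R {s}, ?_, hd2 i0⟩
    · rw [hC]; exact Set.mem_union_left _ ⟨i0, rfl⟩
    · rw [hC]; exact Set.mem_union_right _ rfl
  · -- minimum distance
    have hpair : ∀ U₁ ∈ C, ∀ U₂ ∈ C, U₁ ≠ U₂ → distMod π U₁ U₂ = 2 * r := by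
      intro U₁ hU₁ U₂ hU₂ hne12
      rw [hC] at hU₁ hU₂
      rcases hU₁ with ⟨i, rfl⟩ | hU₁ <;> rcases hU₂ with ⟨j, rfl⟩ | hU₂
      · have hij : i ≠ j := fun h => hne12 (by rw [h])
        rw [distMod, nmin_eq_r hπr (h1 i j hij), nmin_eq_r hπr (h1 j i hij.symm)]
        ring
      · rw [Set.mem_singleton_iff] at hU₂; subst hU₂
        rw [distMod, nmin_eq_r hπr (h2 i), nmin_eq_r hπr (h3 i)]
        ring
      · rw [Set.mem_singleton_iff] at hU₁; subst hU₁
        rw [distMod, nmin_eq_r hπr (h3 j), nmin_eq_r hπr (h2 j)]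
        ring
      · rw [Set.mem_singleton_iff] at hU₁ hU₂
        exact absurd (hU₁.trans hU₂.symm) hne12
    have hT : {n : ℕ | ∃ U₁ ∈ C, ∃ U₂ ∈ C, U₁ ≠ U₂ ∧ distMod π U₁ U₂ = n} = {2 * r} := by
      ext n
      simp only [Set.mem_setOf_eq, Set.mem_singleton_iff]
      constructor
      · rintro ⟨U₁, hU₁, U₂, hU₂, hne12, rfl⟩
        exact hpair U₁ hU₁ U₂ hU₂ hne12
      · rintro rfl
        refine ⟨Submodule.span R {b i0}, ?_, Submodule.span R {s}, ?_, hd2 i0, ?_⟩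
        · rw [hC]; exact Set.mem_union_left _ ⟨i0, rfl⟩
        · rw [hC]; exact Set.mem_union_right _ rfl
        · exact hpair _ (by rw [hC]; exact Set.mem_union_left _ ⟨i0, rfl⟩) _
            (by rw [hC]; exact Set.mem_union_right _ rfl) (hd2 i0)
    rw [minDist, hT, csInf_singleton]

end SphericalSubmoduleCodes
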